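/- Let X be a locally hypercompact T0 space and A an irreducible subset of X. Then there exists a subset D of ↓A that is directed in the specialization order and satisfies cl(A) = cl(D). -/

import Mathlib

open Set Topology

universe u

variable {X : Type u}

/-- Specialization order: `x ≤ y` iff `x ∈ closure {y}`. -/
def specLE [TopologicalSpace X] (x y : X) : Prop := x ∈ closure ({y} : Set X)

/-- Directed subset w.r.t. the specialization order. -/
def dirOn [TopologicalSpace X] (D : Set X) : Prop :=
  D.Nonempty ∧ ∀ a ∈ D, ∀ b ∈ D, ∃ c ∈ D, specLE a c ∧ specLE b c

/-- Downward closure w.r.t. the specialization order. -/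
def dClo [TopologicalSpace X] (A : Set X) : Set X := {x | ∃ a ∈ A, specLE x a}

/-- Upward closure w.r.t. the specialization order. -/
def uClo [TopologicalSpace X] (A : Set X) : Set X := {x | ∃ a ∈ A, specLE a x}

/-- `x` is a supremum of `D` w.r.t. the specialization order. -/
def IsSupOf [TopologicalSpace X] (D : Set X) (x : X) : Prop :=
  (∀ d ∈ D, specLE d x) ∧ ∀ y, (∀ d ∈ D, specLE d y) → specLE x y

/-- A d-space: a T0 space in which every directed set (for the specialization order)
has a supremum, and every open set is inaccessible by directed suprema. -/
def IsDSpace (X : Type u) [TopologicalSpace X] : Prop :=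
  T0Space X ∧ (∀ D : Set X, dirOn D → ∃ x, IsSupOf D x) ∧
    ∀ D : Set X, dirOn D → ∀ x, IsSupOf D x →
      ∀ U : Set X, IsOpen U → x ∈ U → (D ∩ U).Nonempty

/-- A set is saturated if it is the intersection of the open sets containing it. -/
def IsSat [TopologicalSpace X] (A : Set X) : Prop :=
  A = ⋂₀ {U : Set X | IsOpen U ∧ A ⊆ U}

/-- The collection of nonempty compact saturated subsets. -/
def KSet (X : Type u) [TopologicalSpace X] : Set (Set X) :=
  {K | K.Nonempty ∧ IsCompact K ∧ IsSat K}

/-- A filtered family of sets: nonempty, and every two members contain a common member. -/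
def FiltFam [TopologicalSpace X] (𝒦 : Set (Set X)) : Prop :=
  𝒦.Nonempty ∧ ∀ K₁ ∈ 𝒦, ∀ K₂ ∈ 𝒦, ∃ K₃ ∈ 𝒦, K₃ ⊆ K₁ ∧ K₃ ⊆ K₂

/-- Well-filtered space. -/
def IsWF (X : Type u) [TopologicalSpace X] : Prop :=
  T0Space X ∧ ∀ 𝒦 : Set (Set X), 𝒦 ⊆ KSet X → FiltFam 𝒦 →
    ∀ U : Set X, IsOpen U → ⋂₀ 𝒦 ⊆ U → ∃ K ∈ 𝒦, K ⊆ U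

/-- Sober space: every irreducible closed subset is the closure of a unique point. -/
def IsSober (X : Type u) [TopologicalSpace X] : Prop :=
  ∀ A : Set X, IsIrreducible A → IsClosed A → ∃! x : X, A = closure {x}

/-- `V` is way below `U` in the lattice of open sets: every open cover of `U`
has a finite subfamily covering `V`. -/
def wayBelow [TopologicalSpace X] (V U : Set X) : Prop :=
  ∀ 𝒞 : Set (Set X), (∀ W ∈ 𝒞, IsOpen W) → U ⊆ ⋃₀ 𝒞 →
    ∃ 𝒟 ⊆ 𝒞, 𝒟.Finite ∧ V ⊆ ⋃₀ 𝒟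

/-- Core compact space. -/
def CoreCompact (X : Type u) [TopologicalSpace X] : Prop :=
  ∀ (x : X) (U : Set X), IsOpen U → x ∈ U →
    ∃ V : Set X, IsOpen V ∧ x ∈ V ∧ wayBelow V U

/-- The underlying type of the Smyth power space: nonempty compact saturated subsets. -/
abbrev KS (X : Type u) [TopologicalSpace X] : Type u :=
  {K : Set X // K.Nonempty ∧ IsCompact K ∧ IsSat K}

/-- The upper Vietoris topology on `KS X`, generated by the sets
`□U = {K | K ⊆ U}` for `U` open; this makes `KS X` the Smyth power space `P_S(X)`. -/
instance (X : Type u) [TopologicalSpace X] : TopologicalSpace (KS X) :=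
  TopologicalSpace.generateFrom
    {S | ∃ U : Set X, IsOpen U ∧ S = {K : KS X | (K : Set X) ⊆ U}}

/-- Rudin set: a nonempty closed set that is a minimal closed set meeting all
members of some filtered family of nonempty compact saturated sets. -/
def RudinSet [TopologicalSpace X] (A : Set X) : Prop :=
  IsClosed A ∧ A.Nonempty ∧ ∃ 𝒦 : Set (Set X), 𝒦 ⊆ KSet X ∧ FiltFam 𝒦 ∧
    (∀ K ∈ 𝒦, (K ∩ A).Nonempty) ∧
    ∀ B : Set X, IsClosed B → B ⊆ A → (∀ K ∈ 𝒦, (K ∩ B).Nonempty) → B = A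

/-- Well-filtered determined (WD) set. -/
def IsWDSet [TopologicalSpace X] (A : Set X) : Prop :=
  IsClosed A ∧ A.Nonempty ∧ ∀ (Y : Type u) [TopologicalSpace Y], IsWF Y →
    ∀ f : X → Y, Continuous f → ∃ y : Y, closure (f '' A) = closure {y}

/-- Rudin space: every irreducible closed set is a Rudin set. -/
def RudinSpace (X : Type u) [TopologicalSpace X] : Prop :=
  ∀ A : Set X, IsClosed A → IsIrreducible A → RudinSet A

/-- WD space: every irreducible closed set is a WD set. -/
def WDSpace (X : Type u) [TopologicalSpace X] : Prop :=
  ∀ A : Set X, IsClosed A → IsIrreducible A → IsWDSet A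

/-- DC space: every irreducible closed set is the closure of a directed set. -/
def DCSpace (X : Type u) [TopologicalSpace X] : Prop :=
  ∀ A : Set X, IsClosed A → IsIrreducible A → ∃ D : Set X, dirOn D ∧ A = closure D

/-- A space is locally hypercompact if every point has, inside each of its open
neighborhoods, a neighborhood of the form `↑F` for a nonempty finite set `F`. -/
def LocallyHyperCompact (X : Type u) [TopologicalSpace X] : Prop :=
  ∀ (x : X) (U : Set X), IsOpen U → x ∈ U →
    ∃ F : Finset X, F.Nonempty ∧ x ∈ interior (uClo ↑F) ∧ uClo ↑F ⊆ U

/-- in a locally hypercompact T0 space, for every irreducible set `A`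
there is a directed set `D ⊆ ↓A` with `cl A = cl D`. -/
theorem stmt10 {X : Type u} [TopologicalSpace X] [T0Space X]
    (hX : LocallyHyperCompact X) (A : Set X) (hA : IsIrreducible A) :
    ∃ D ⊆ dClo A, dirOn D ∧ closure A = closure D := by
  classical
  obtain ⟨hAne, hApre⟩ := hA
  have refl' : ∀ x : X, specLE x x := fun x => subset_closure rfl
  have trans' : ∀ {x y z : X}, specLE x y → specLE y z → specLE x z := by
    intro x y z hxy hyz
    have h1 : ({y} : Set X) ⊆ closure ({z} : Set X) := by
      intro t ht; rcases ht with rfl; exact hyz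
    exact closure_minimal h1 isClosed_closure hxy
  have mem_open : ∀ {x y : X} {U : Set X}, specLE x y → IsOpen U → x ∈ U → y ∈ U := by
    intro x y U hxy hU hx
    rcases mem_closure_iff.mp hxy U hU hx with ⟨z, hzU, hz⟩
    rcases hz with rfl; exact hzU
  -- the family of finite "approximating" sets
  set Fam : Set (Set X) :=
    {F | F.Finite ∧ F.Nonempty ∧ F ⊆ dClo A ∧
      ∃ W : Set X, IsOpen W ∧ (A ∩ W).Nonempty ∧ W ∩ dClo A ⊆ uClo F} with hFamdef
  -- base lemma: inside any open set meeting A there is a member of Fam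
  have L0 : ∀ U : Set X, IsOpen U → (A ∩ U).Nonempty → ∃ F ∈ Fam, F ⊆ U := by
    intro U hU hAU
    obtain ⟨a, haA, haU⟩ := hAU
    obtain ⟨F₀, hF₀ne, haint, hsub⟩ := hX a U hU haU
    have haA' : a ∈ dClo A := ⟨a, haA, refl' a⟩
    refine ⟨(↑F₀ : Set X) ∩ dClo A, ⟨(F₀.finite_toSet).inter_of_left _, ?_, inter_subset_right, ?_⟩, ?_⟩
    · -- nonempty
      have ha' : a ∈ uClo (↑F₀ : Set X) := interior_subset haint
      obtain ⟨f, hfF, hfa⟩ := ha'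
      exact ⟨f, hfF, ⟨a, haA, hfa⟩⟩
    · refine ⟨interior (uClo (↑F₀ : Set X)), isOpen_interior, ⟨a, haA, haint⟩, ?_⟩
      rintro z ⟨hz1, hz2⟩
      obtain ⟨f, hfF, hfz⟩ := interior_subset hz1
      obtain ⟨a', ha'A, hza'⟩ := hz2
      exact ⟨f, ⟨hfF, ⟨a', ha'A, trans' hfz hza'⟩⟩, hfz⟩
    · intro f hf
      exact hsub ⟨f, hf.1, refl' f⟩
  -- directedness of Fam
  have L2 : ∀ F ∈ Fam, ∀ G ∈ Fam, ∃ H ∈ Fam, H ⊆ uClo F ∧ H ⊆ uClo G := by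
    intro F hF G hG
    obtain ⟨-, -, -, WF, hWFo, hWFA, hWF⟩ := hF
    obtain ⟨-, -, -, WG, hWGo, hWGA, hWG⟩ := hG
    have hint : (A ∩ (WF ∩ WG)).Nonempty := hApre WF WG hWFo hWGo hWFA hWGA
    obtain ⟨H, hH, hHsub⟩ := L0 (WF ∩ WG) (hWFo.inter hWGo) hint
    have hHd : H ⊆ dClo A := hH.2.2.1
    refine ⟨H, hH, ?_, ?_⟩
    · intro h hh; exact hWF ⟨(hHsub hh).1, hHd hh⟩
    · intro h hh; exact hWG ⟨(hHsub hh).2, hHd hh⟩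
  -- the class of adequate, downward-closed subsets of dClo A
  set Adq : Set (Set X) :=
    {M | M ⊆ dClo A ∧ (∀ z ∈ dClo A, ∀ w ∈ M, specLE z w → z ∈ M) ∧
      ∀ F ∈ Fam, (M ∩ F).Nonempty} with hAdqdef
  have hbase : dClo A ∈ Adq := by
    refine ⟨Subset.rfl, fun z hz _ _ _ => hz, ?_⟩
    intro F hF
    obtain ⟨f, hf⟩ := hF.2.1
    exact ⟨f, hF.2.2.1 hf, hf⟩
  -- Zorn: a minimal adequate downward-closed set
  have hzorn : ∀ c ⊆ Adq, IsChain (· ⊆ ·) c → ∃ lb ∈ Adq, ∀ s ∈ c, lb ⊆ s := by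
    intro c hc hchain
    rcases c.eq_empty_or_nonempty with rfl | ⟨M₀, hM₀⟩
    · exact ⟨dClo A, hbase, by simp⟩
    · refine ⟨⋂₀ c, ⟨?_, ?_, ?_⟩, fun s hs => sInter_subset_of_mem hs⟩
      · exact (sInter_subset_of_mem hM₀).trans (hc hM₀).1
      · intro z hz w hw hzw
        intro M hM
        exact (hc hM).2.1 z hz w (hw M hM) hzw
      · intro F hF
        -- minimal trace of the chain on the finite set F
        have hTfin : ((fun M => M ∩ F) '' c).Finite := by
          apply Set.Finite.subset hF.1.finite_subsets
          rintro t ⟨M, -, rfl⟩; exact inter_subset_right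
        have hTne : ((fun M => M ∩ F) '' c).Nonempty := ⟨M₀ ∩ F, mem_image_of_mem _ hM₀⟩
        obtain ⟨t₀, ht₀, hmin⟩ : ∃ t₀ ∈ (fun M => M ∩ F) '' c,
            ∀ t ∈ (fun M => M ∩ F) '' c, t ≤ t₀ → t₀ = t := by
          obtain ⟨t₀, ht₀⟩ := hTfin.exists_minimal hTne
          exact ⟨t₀, ht₀.prop, fun t ht h => le_antisymm (ht₀.le_of_le ht h) h⟩
        obtain ⟨M₁, hM₁c, rfl⟩ := ht₀
        have hsub : ∀ M ∈ c, M₁ ∩ F ⊆ M := by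
          intro M hM
          rcases hchain.total hM₁c hM with h | h
          · exact (inter_subset_left).trans h
          · have : M₁ ∩ F = M ∩ F := hmin (M ∩ F) (mem_image_of_mem _ hM)
              (inter_subset_inter_left F h)
            rw [this]; exact inter_subset_left
        obtain ⟨m, hm⟩ := (hc hM₁c).2.2 F hF
        exact ⟨m, fun M hM => hsub M hM ⟨hm.1, hm.2⟩, hm.2⟩
  obtain ⟨M, hMmin⟩ := zorn_superset Adq hzorn
  obtain ⟨hMA, hMmin'⟩ := hMmin
  obtain ⟨hMsub, hMdown, hMadq⟩ := hMA
  have hmin : ∀ N ∈ Adq, N ⊆ M → N = M := by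
    intro N hN hNM
    exact le_antisymm hNM (hMmin' hN hNM)
  -- key step (♦): every element of M is below an element of M ∩ ↑F
  have diamond : ∀ F ∈ Fam, ∀ x ∈ M, ∃ m ∈ M, m ∈ uClo F ∧ specLE x m := by
    intro F hF x hx
    set N : Set X := {z | z ∈ dClo A ∧ ∃ m ∈ M, m ∈ uClo F ∧ specLE z m} with hNdef
    have hNsub : N ⊆ M := by
      rintro z ⟨hz, m, hmM, -, hzm⟩
      exact hMdown z hz m hmM hzm
    have hNA : N ∈ Adq := by
      refine ⟨fun z hz => hz.1, ?_, ?_⟩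
      · rintro z hz w ⟨-, m, hmM, hmF, hwm⟩ hzw
        exact ⟨hz, m, hmM, hmF, trans' hzw hwm⟩
      · intro G hG
        obtain ⟨H, hH, hHF, hHG⟩ := L2 F hF G hG
        obtain ⟨m, hmM, hmH⟩ := hMadq H hH
        obtain ⟨g, hgG, hgm⟩ := hHG hmH
        exact ⟨g, ⟨hG.2.2.1 hgG, m, hmM, hHF hmH, hgm⟩, hgG⟩
    have := hmin N hNA hNsub
    rw [← this] at hx
    exact hx.2
  -- directedness of M
  have hdir : ∀ x ∈ M, ∀ y ∈ M, ∃ m ∈ M, specLE x m ∧ specLE y m := by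
    intro x hx y hy
    set N : Set X := {z | z ∈ dClo A ∧ ∃ m ∈ M, specLE x m ∧ specLE z m} with hNdef
    have hNsub : N ⊆ M := by
      rintro z ⟨hz, m, hmM, -, hzm⟩
      exact hMdown z hz m hmM hzm
    have hNA : N ∈ Adq := by
      refine ⟨fun z hz => hz.1, ?_, ?_⟩
      · rintro z hz w ⟨-, m, hmM, hxm, hwm⟩ hzw
        exact ⟨hz, m, hmM, hxm, trans' hzw hwm⟩
      · intro F hF
        obtain ⟨m, hmM, hmF, hxm⟩ := diamond F hF x hx
        obtain ⟨f, hfF, hfm⟩ := hmF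
        exact ⟨f, ⟨hF.2.2.1 hfF, m, hmM, hxm, hfm⟩, hfF⟩
    have := hmin N hNA hNsub
    rw [← this] at hy
    obtain ⟨-, m, hmM, hxm, hym⟩ := hy
    exact ⟨m, hmM, hxm, hym⟩
  -- M is nonempty
  have hFamne : ∃ F, F ∈ Fam := by
    obtain ⟨F, hF, -⟩ := L0 univ isOpen_univ (by simpa using hAne)
    exact ⟨F, hF⟩
  have hMne : M.Nonempty := by
    obtain ⟨F, hF⟩ := hFamne
    obtain ⟨m, hm, -⟩ := hMadq F hF
    exact ⟨m, hm⟩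
  -- closures agree
  have hdcl : dClo A ⊆ closure A := by
    rintro z ⟨a, haA, hza⟩
    exact closure_mono (singleton_subset_iff.mpr haA) hza
  have hAclM : A ⊆ closure M := by
    intro a haA
    rw [mem_closure_iff]
    intro U hU haU
    obtain ⟨F, hF, hFU⟩ := L0 U hU ⟨a, haA, haU⟩
    obtain ⟨m, hmM, hmF⟩ := hMadq F hF
    exact ⟨m, hFU hmF, hmM⟩
  refine ⟨M, hMsub, ⟨hMne, fun a ha b hb => ?_⟩, ?_⟩
  · obtain ⟨m, hmM, h1, h2⟩ := hdir a ha b hb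
    exact ⟨m, hmM, h1, h2⟩
  · apply le_antisymm
    · exact closure_minimal hAclM isClosed_closure
    · exact closure_minimal (hMsub.trans hdcl) isClosed_closure
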